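/- Let (X, C) be a pair of random variables with X ≥ 0, C > 0, E[X] < ∞. Define for the one-asset system with linear price impact h(χ) = χ and differentiable sales function ρ: ℝ≥0 → [0,1] with ρ(0) = 0: f(χ) = E[X ρ(X χ / C)] − χ. If E[X² / C] < ∞ and E[X²/C] · ρ'(0) < 1, then f'(0) exists and equals E[X²/C] ρ'(0) − 1 < 0, and consequently there exists δ > 0 such that f(χ) < 0 for all χ ∈ (0, δ]. -/

import Mathlib

open MeasureTheory Filter Set

/-- Resilience direction of Corollary 4.3 (case 2): with linear price impact,
if `E[X²/C]·ρ'(0) < 1` then `f(χ) = E[X ρ(Xχ/C)] − χ` has right derivative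
`E[X²/C]·ρ'(0) − 1 < 0` at `0`, and consequently `f < 0` on some `(0, δ]`. -/
theorem stmt9 {Ω : Type*} [MeasurableSpace Ω] (μ : Measure Ω) [IsProbabilityMeasure μ]
    (X C : Ω → ℝ) (hXm : Measurable X) (hCm : Measurable C)
    (hX : ∀ ω, 0 ≤ X ω) (hC : ∀ ω, 0 < C ω)
    (hXint : Integrable X μ)
    (ρ : ℝ → ℝ) (hρ0 : ρ 0 = 0) (hρmono : Monotone ρ)
    (hρrange : ∀ u, 0 ≤ ρ u ∧ ρ u ≤ 1)
    (ρ'0 : ℝ) (hρdiff : HasDerivAt ρ ρ'0 0)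
    (hmom : Integrable (fun ω => X ω ^ 2 / C ω) μ)
    (hres : (∫ ω, X ω ^ 2 / C ω ∂μ) * ρ'0 < 1) :
    HasDerivWithinAt (fun χ => (∫ ω, X ω * ρ (X ω * χ / C ω) ∂μ) - χ)
        ((∫ ω, X ω ^ 2 / C ω ∂μ) * ρ'0 - 1) (Set.Ici 0) 0 ∧
      ∃ δ > 0, ∀ χ ∈ Set.Ioc (0 : ℝ) δ,
        (∫ ω, X ω * ρ (X ω * χ / C ω) ∂μ) - χ < 0 := by
  have hρm : Measurable ρ := hρmono.measurable
  have hslope : Filter.Tendsto (slope ρ 0) (nhdsWithin 0 {0}ᶜ) (nhds ρ'0) :=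
    hasDerivAt_iff_tendsto_slope.mp hρdiff
  -- a linear bound ρ u ≤ K u for u ≥ 0
  obtain ⟨K, hK0, hK⟩ : ∃ K > 0, ∀ u : ℝ, 0 ≤ u → ρ u ≤ K * u := by
    have h1 : ∀ᶠ u in nhdsWithin 0 {0}ᶜ, slope ρ 0 u < ρ'0 + 1 :=
      hslope.eventually_lt_const (by linarith)
    rw [eventually_nhdsWithin_iff, Metric.eventually_nhds_iff] at h1
    obtain ⟨ε, hε, hball⟩ := h1
    refine ⟨max (ρ'0 + 1) (2 / ε), lt_max_of_lt_right (by positivity), ?_⟩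
    intro u hu
    rcases eq_or_lt_of_le hu with h | h
    · simp [← h, hρ0]
    rcases lt_or_ge u (ε / 2) with h2 | h2
    · have hd : dist u 0 < ε := by
        rw [Real.dist_eq, sub_zero, abs_of_pos h]; linarith
      have := hball hd (by simpa using h.ne')
      rw [slope_def_field, hρ0, sub_zero, sub_zero, div_lt_iff₀ h] at this
      calc ρ u ≤ (ρ'0 + 1) * u := this.le
        _ ≤ max (ρ'0 + 1) (2 / ε) * u := by
            apply mul_le_mul_of_nonneg_right (le_max_left _ _) h.le
    · calc ρ u ≤ 1 := (hρrange u).2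
        _ ≤ 2 / ε * u := by rw [div_mul_eq_mul_div, le_div_iff₀ hε]; linarith
        _ ≤ max (ρ'0 + 1) (2 / ε) * u := by
            apply mul_le_mul_of_nonneg_right (le_max_right _ _) h.le
  set I : ℝ := ∫ ω, X ω ^ 2 / C ω ∂μ with hI
  -- main dominated convergence
  have key : Tendsto (fun χ : ℝ => ∫ ω, X ω * ρ (X ω * χ / C ω) / χ ∂μ)
      (nhdsWithin 0 (Set.Ioi 0)) (nhds (∫ ω, X ω ^ 2 / C ω * ρ'0 ∂μ)) := by
    apply tendsto_integral_filter_of_dominated_convergence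
      (bound := fun ω => K * (X ω ^ 2 / C ω))
    · filter_upwards with χ
      exact ((hXm.mul (hρm.comp ((hXm.mul_const χ).div hCm))).div_const χ).aestronglyMeasurable
    · filter_upwards [self_mem_nhdsWithin] with χ (hχ : 0 < χ)
      filter_upwards with ω
      have hu : 0 ≤ X ω * χ / C ω := div_nonneg (mul_nonneg (hX ω) hχ.le) (hC ω).le
      have h2 : ρ (X ω * χ / C ω) ≤ K * (X ω * χ / C ω) := hK _ hu
      have hnn : 0 ≤ X ω * ρ (X ω * χ / C ω) / χ :=
        div_nonneg (mul_nonneg (hX ω) (hρrange _).1) hχ.le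
      rw [Real.norm_eq_abs, abs_of_nonneg hnn]
      have hχ' := hχ.ne'
      calc X ω * ρ (X ω * χ / C ω) / χ ≤ X ω * (K * (X ω * χ / C ω)) / χ := by
            gcongr ?_ / χ
            exact mul_le_mul_of_nonneg_left h2 (hX ω)
        _ = K * (X ω ^ 2 / C ω) := by
            have hC' := (hC ω).ne'
            rw [div_eq_iff hχ']
            field_simp
    · exact hmom.const_mul K
    · filter_upwards with ω
      rcases eq_or_lt_of_le (hX ω) with hx0 | hx
      · simpa [← hx0, hρ0] using tendsto_const_nhds
      · have hc : 0 < X ω / C ω := div_pos hx (hC ω)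
        have hcomp : Tendsto (fun χ : ℝ => X ω / C ω * χ) (nhdsWithin 0 (Set.Ioi 0))
            (nhdsWithin 0 {0}ᶜ) := by
          rw [tendsto_nhdsWithin_iff]
          constructor
          · have h := (continuous_mul_left (X ω / C ω)).tendsto (0 : ℝ)
            rw [mul_zero] at h
            exact h.mono_left nhdsWithin_le_nhds
          · filter_upwards [self_mem_nhdsWithin] with χ (hχ : 0 < χ)
            exact (mul_pos hc hχ).ne'
        have hT := ((hslope.comp hcomp).const_mul (X ω ^ 2 / C ω))
        refine hT.congr' ?_
        filter_upwards [self_mem_nhdsWithin] with χ (hχ : 0 < χ)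
        show X ω ^ 2 / C ω * slope ρ 0 (X ω / C ω * χ) = X ω * ρ (X ω * χ / C ω) / χ
        have hC' := (hC ω).ne'
        have hx' := hx.ne'
        have hχ' := hχ.ne'
        have harg : X ω / C ω * χ = X ω * χ / C ω := by ring
        rw [slope_def_field, hρ0, sub_zero, sub_zero, harg]
        generalize ρ (X ω * χ / C ω) = r
        field_simp
  have hIρ : (∫ ω, X ω ^ 2 / C ω * ρ'0 ∂μ) = I * ρ'0 := by
    rw [integral_mul_const]
  -- integral of divided function
  have hdiv : ∀ χ : ℝ, (∫ ω, X ω * ρ (X ω * χ / C ω) / χ ∂μ)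
      = (∫ ω, X ω * ρ (X ω * χ / C ω) ∂μ) / χ := fun χ => integral_div χ _
  have hint : Tendsto (fun χ : ℝ => (∫ ω, X ω * ρ (X ω * χ / C ω) ∂μ) / χ)
      (nhdsWithin 0 (Set.Ioi 0)) (nhds (I * ρ'0)) := by
    rw [← hIρ]
    exact key.congr fun χ => hdiv χ
  constructor
  · rw [hasDerivWithinAt_iff_tendsto_slope]
    have hset : Set.Ici (0:ℝ) \ {0} = Set.Ioi 0 := Set.Ici_sdiff_left
    rw [hset]
    refine (hint.sub_const 1).congr' ?_
    filter_upwards [self_mem_nhdsWithin] with χ (hχ : 0 < χ)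
    rw [slope_def_field]
    simp only [mul_zero, zero_div, hρ0, integral_zero, sub_zero]
    rw [sub_div, div_self hχ.ne']
  · have hev : ∀ᶠ χ in nhdsWithin 0 (Set.Ioi 0),
        (∫ ω, X ω * ρ (X ω * χ / C ω) ∂μ) / χ < 1 :=
      hint.eventually_lt_const hres
    rw [(nhdsGT_basis (0:ℝ)).eventually_iff] at hev
    obtain ⟨b, hb, hball⟩ := hev
    refine ⟨b / 2, by linarith, fun χ hχ => ?_⟩
    have hχb : χ ∈ Set.Ioo (0:ℝ) b := ⟨hχ.1, lt_of_le_of_lt hχ.2 (by linarith)⟩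
    have := hball hχb
    rw [div_lt_one hχ.1] at this
    linarith
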